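/- The function Ent is invariant under local operations: for all k1, k2 ∈ SU(2) (2×2 unitary matrices with determinant 1) and all ψ ∈ ℂ⁴, Ent((k1⊗k2)ψ) = Ent ψ. -/
import Mathlib


open Matrix Complex

noncomputable section

/-- Pauli matrix σx. -/
def sigmaX : Matrix (Fin 2) (Fin 2) ℂ := !![0, 1; 1, 0]
/-- Pauli matrix σy. -/
def sigmaY : Matrix (Fin 2) (Fin 2) ℂ := !![0, -I; I, 0]
/-- Pauli matrix σz. -/
def sigmaZ : Matrix (Fin 2) (Fin 2) ℂ := !![1, 0; 0, -1]

/-- Kronecker product of two 2×2 complex matrices, as a 4×4 matrix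
(row-major ordering: entry ((2i+k),(2j+l)) is `A i j * B k l`). -/
def kron (A B : Matrix (Fin 2) (Fin 2) ℂ) : Matrix (Fin 4) (Fin 4) ℂ :=
  Matrix.of fun i j =>
    A ⟨i.val / 2, by have := i.isLt; omega⟩ ⟨j.val / 2, by have := j.isLt; omega⟩ *
    B ⟨i.val % 2, by have := i.isLt; omega⟩ ⟨j.val % 2, by have := j.isLt; omega⟩

/-- The matrix P = -(1/2) σy⊗σy. -/
def Pmat : Matrix (Fin 4) (Fin 4) ℂ := (-(1/2) : ℂ) • kron sigmaY sigmaY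

/-- Ent ψ = ψᵀ P ψ. -/
def Ent (ψ : Fin 4 → ℂ) : ℂ := ∑ i, ∑ j, ψ i * Pmat i j * ψ j

/-- Membership in SU(2): 2×2 unitary with determinant 1. -/
def InSU2 (k : Matrix (Fin 2) (Fin 2) ℂ) : Prop := kᴴ * k = 1 ∧ k.det = 1

/-- Ent is invariant under local operations k1⊗k2 with k1, k2 ∈ SU(2). -/
theorem ent_local_invariant (k1 k2 : Matrix (Fin 2) (Fin 2) ℂ)
    (h1 : InSU2 k1) (h2 : InSU2 k2) (ψ : Fin 4 → ℂ) :
    Ent ((kron k1 k2).mulVec ψ) = Ent ψ := by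
  have d1 := h1.2
  have d2 := h2.2
  rw [Matrix.det_fin_two] at d1 d2
  simp only [Ent, Pmat, kron, sigmaY, Matrix.mulVec, dotProduct,
    Fin.sum_univ_four, Matrix.of_apply, Matrix.smul_apply, smul_eq_mul,
    show ((0:Fin 4):ℕ) = 0 from rfl, show ((1:Fin 4):ℕ) = 1 from rfl,
    show ((2:Fin 4):ℕ) = 2 from rfl, show ((3:Fin 4):ℕ) = 3 from rfl,
    Nat.reduceDiv, Nat.reduceMod, Fin.mk_zero, Fin.mk_one,
    Matrix.cons_val_zero, Matrix.cons_val_one, Matrix.head_cons]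
  have hI : I ^ 2 = -1 := Complex.I_sq
  linear_combination (I * (ψ 0 * ψ 3 - ψ 1 * ψ 2)) * ((k1 0 0 * k1 1 1 - k1 0 1 * k1 1 0) * d2 + d1) +
    (ψ 1 * ψ 2 - ψ 0 * ψ 3) *
      ((k1 0 0 * k1 1 1 - k1 0 1 * k1 1 0) * (k2 0 0 * k2 1 1 - k2 0 1 * k2 1 0) - 1) * hI +
    (I - 1) * (ψ 1 * ψ 2 - ψ 0 * ψ 3) *
      ((k1 0 0 * k1 1 1 - k1 0 1 * k1 1 0) * d2 + d1)

end
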